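/- Let R be a commutative ring complete for the I-adic topology where I is an ideal with divided powers γᵢ, and let x ∈ I. Then the series log(1+x) := Σ_{i≥1} (−1)^{i+1} (i−1)!·γᵢ(x) converges in R and defines a group homomorphism log: (1 + I, ×) → (I, +), i.e., log((1+x)(1+y)) = log(1+x) + log(1+y) for x, y ∈ I. -/

import Mathlib

open Finset

private def Fint (i j : ℕ) : ℤ :=
  ∑ b ∈ Finset.range (j + 1),
    (-1 : ℤ) ^ b * (i.descFactorial b : ℤ) * (j.choose b : ℤ) *
      ((i + j - b - 1).factorial : ℤ)

private lemma Fint_one (i : ℕ) (hi : 1 ≤ i) : Fint i 1 = 0 := by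
  obtain ⟨i', rfl⟩ : ∃ i', i = i' + 1 := ⟨i - 1, by omega⟩
  simp [Fint, Finset.sum_range_succ, Nat.factorial_succ]
  ring

private lemma Fint_succ (i k : ℕ) (hi : 1 ≤ i) (hk : 1 ≤ k) :
    Fint i (k + 1) = (k : ℤ) * Fint i k := by
  have h1 : Fint i (k + 1) = ∑ b ∈ Finset.range (k + 2),
      (-1 : ℤ) ^ b * (i.descFactorial b : ℤ) * ((k + 1).choose b : ℤ) *
        ((i + k - b).factorial : ℤ) := by
    apply Finset.sum_congr rfl
    intro b hb
    simp only [Finset.mem_range] at hb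
    have : i + (k + 1) - b - 1 = i + k - b := by omega
    rw [this]
  have h2 : Fint i (k + 1) =
      (∑ b ∈ Finset.range (k + 2),
        (-1 : ℤ) ^ b * (i.descFactorial b : ℤ) * (k.choose b : ℤ) *
          ((i + k - b).factorial : ℤ)) +
      ∑ b ∈ Finset.range (k + 1),
        (-1 : ℤ) ^ (b + 1) * (i.descFactorial (b + 1) : ℤ) * (k.choose b : ℤ) *
          ((i + k - b - 1).factorial : ℤ) := by
    rw [h1, Finset.sum_range_succ' _ (k + 1), Finset.sum_range_succ' _ (k + 1),
      add_right_comm, ← Finset.sum_add_distrib]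
    congr 1
    · apply Finset.sum_congr rfl
      intro b hb
      simp only [Finset.mem_range] at hb
      have e1 : i + k - (b + 1) = i + k - b - 1 := by omega
      rw [e1, Nat.choose_succ_succ]
      push_cast
      ring
    · simp
  have h3 : (∑ b ∈ Finset.range (k + 2),
        (-1 : ℤ) ^ b * (i.descFactorial b : ℤ) * (k.choose b : ℤ) *
          ((i + k - b).factorial : ℤ)) =
      ∑ b ∈ Finset.range (k + 1),
        (-1 : ℤ) ^ b * (i.descFactorial b : ℤ) * (k.choose b : ℤ) *
          ((i + k - b).factorial : ℤ) := by
    rw [Finset.sum_range_succ]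
    simp [Nat.choose_succ_self]
  rw [h2, h3, ← Finset.sum_add_distrib, Fint, Finset.mul_sum]
  apply Finset.sum_congr rfl
  intro b hb
  simp only [Finset.mem_range] at hb
  by_cases hbi : b ≤ i
  · have h6 : ((i + k - b).factorial : ℤ) =
        ((i : ℤ) + k - b) * ((i + k - b - 1).factorial : ℤ) := by
      have h7 : i + k - b = (i + k - b - 1) + 1 := by omega
      generalize hg : i + k - b - 1 = a at h7 ⊢
      have h8 : (a : ℤ) + 1 = (i : ℤ) + k - b := by omega
      rw [h7, Nat.factorial_succ]
      push_cast
      rw [h8]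
    have hd : (i.descFactorial (b + 1) : ℤ) = ((i : ℤ) - b) * (i.descFactorial b : ℤ) := by
      rw [Nat.descFactorial_succ]
      push_cast
      have h9 : ((i - b : ℕ) : ℤ) = (i : ℤ) - b := by omega
      rw [h9]
    rw [h6, hd]
    ring
  · have hz : i.descFactorial b = 0 := Nat.descFactorial_eq_zero_iff_lt.mpr (by omega)
    have hz' : i.descFactorial (b + 1) = 0 := Nat.descFactorial_eq_zero_iff_lt.mpr (by omega)
    rw [hz, hz']
    push_cast
    ring

private lemma Fint_eq_zero (i j : ℕ) (hi : 1 ≤ i) (hj : 1 ≤ j) : Fint i j = 0 := by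
  induction j with
  | zero => omega
  | succ k ih =>
    rcases Nat.eq_or_lt_of_le hj with h | h
    · rw [← h]
      exact Fint_one i hi
    · rw [Fint_succ i k hi (by omega), ih (by omega), mul_zero]


private def lc (R : Type*) [CommRing R] (n : ℕ) : R :=
  (-1) ^ (n + 1) * ((n - 1).factorial : R)

private def Kco (R : Type*) [CommRing R] (m i j : ℕ) : R :=
  ∑ b ∈ Finset.range (2 * m + 1),
    lc R (i + j - b) * ((b.factorial * i.choose b * j.choose b : ℕ) : R)

private def Hterm {R : Type*} [CommRing R] {I : Ideal R} (dp : DividedPowers I)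
    (x y : R) (t : ℕ × ℕ × ℕ) : R :=
  lc R (t.1 + t.2.1 - t.2.2) *
    ((t.2.2.factorial * t.1.choose t.2.2 * t.2.1.choose t.2.2 : ℕ) : R) *
    (dp.dpow t.1 x * dp.dpow t.2.1 y)

private def fterm {R : Type*} [CommRing R] {I : Ideal R} (dp : DividedPowers I)
    (x y : R) (p : Σ _ : ℕ, Σ _ : ℕ, ℕ) : R :=
  lc R p.1 * (((p.1 - p.2.1).factorial : R) *
    (((p.2.2 + (p.1 - p.2.1)).choose p.2.2 : ℕ) : R) *
    ((((p.2.1 - p.2.2) + (p.1 - p.2.1)).choose (p.2.1 - p.2.2) : ℕ) : R) *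
    dp.dpow (p.2.2 + (p.1 - p.2.1)) x * dp.dpow ((p.2.1 - p.2.2) + (p.1 - p.2.1)) y)

private lemma Hsum {R : Type*} [CommRing R] {I : Ideal R} (dp : DividedPowers I)
    (x y : R) (m i j : ℕ) :
    (∑ b ∈ Finset.range (2 * m + 1), Hterm dp x y (i, j, b)) =
      Kco R m i j * (dp.dpow i x * dp.dpow j y) := by
  rw [Kco, Finset.sum_mul]
  apply Finset.sum_congr rfl
  intro b _
  simp only [Hterm]

private lemma Kco_zero_left {R : Type*} [CommRing R] (m j : ℕ) :
    Kco R m 0 j = lc R j := by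
  rw [Kco, Finset.sum_eq_single 0]
  · simp [lc]
  · intro b _ hb
    have h : Nat.choose 0 b = 0 := Nat.choose_eq_zero_of_lt (by omega)
    simp [h]
  · intro h
    exact absurd (Finset.mem_range.mpr (by omega)) h

private lemma Kco_zero_right {R : Type*} [CommRing R] (m i : ℕ) :
    Kco R m i 0 = lc R i := by
  rw [Kco, Finset.sum_eq_single 0]
  · simp [lc]
  · intro b _ hb
    have h : Nat.choose 0 b = 0 := Nat.choose_eq_zero_of_lt (by omega)
    simp [h]
  · intro h
    exact absurd (Finset.mem_range.mpr (by omega)) h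

private lemma Kco_eq_zero {R : Type*} [CommRing R] (m i j : ℕ)
    (hi : 1 ≤ i) (hj : 1 ≤ j) (hjm : j ≤ 2 * m) : Kco R m i j = 0 := by
  rw [Kco]
  rw [← Finset.sum_subset (Finset.range_subset_range.mpr (by omega : j + 1 ≤ 2 * m + 1))
    (by
      intro b _ hb
      have h : j.choose b = 0 := Nat.choose_eq_zero_of_lt (by simp only [Finset.mem_range] at hb; omega)
      simp [h])]
  have hterm : ∀ b ∈ Finset.range (j + 1),
      lc R (i + j - b) * ((b.factorial * i.choose b * j.choose b : ℕ) : R) =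
      (-1 : R) ^ (i + j + 1) *
        (((-1 : ℤ) ^ b * (i.descFactorial b : ℤ) * (j.choose b : ℤ) *
          ((i + j - b - 1).factorial : ℤ) : ℤ) : R) := by
    intro b hb
    simp only [Finset.mem_range] at hb
    have hsign : (-1 : R) ^ (i + j - b + 1) = (-1) ^ (i + j + 1) * (-1) ^ b := by
      have h2 : (i + j + 1) + b = (i + j - b + 1) + 2 * b := by omega
      calc (-1 : R) ^ (i + j - b + 1)
          = (-1) ^ (i + j - b + 1) * ((-1) ^ 2) ^ b := by norm_num
        _ = (-1) ^ ((i + j - b + 1) + 2 * b) := by rw [← pow_mul, ← pow_add]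
        _ = (-1) ^ ((i + j + 1) + b) := by rw [← h2]
        _ = (-1) ^ (i + j + 1) * (-1) ^ b := by rw [pow_add]
    rw [← Nat.descFactorial_eq_factorial_mul_choose]
    simp only [lc]
    rw [hsign]
    push_cast
    ring
  rw [Finset.sum_congr rfl hterm, ← Finset.mul_sum, ← Int.cast_sum]
  have hF := Fint_eq_zero i j hi hj
  simp only [Fint] at hF
  rw [hF]
  simp

/-- Let `R` be a commutative ring, `I` an ideal with divided
powers `γᵢ`, complete for the `I`-adic topology — here the convergence is
encoded by the (PD-)nilpotency hypothesis `γᵢ(x) = 0` for `i ≥ m`, so that the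
series `log(1+x) = Σ_{i≥1} (−1)^{i+1} (i−1)!·γᵢ(x)` is the finite sum
`Σ_{1 ≤ i ≤ m}`.  Then `log` defines a group homomorphism
`(1 + I, ×) → (I, +)`:  `log((1+x)(1+y)) = log(1+x) + log(1+y)` for
`x, y ∈ I`. -/
theorem stmt_17 {R : Type*} [CommRing R] (I : Ideal R) (dp : DividedPowers I)
    (m : ℕ) (hconv : ∀ x ∈ I, ∀ i : ℕ, m ≤ i → dp.dpow i x = 0) :
    -- the values of log lie in I …
    (∀ x ∈ I,
      (∑ i ∈ Finset.Icc 1 m,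
        (-1 : R) ^ (i + 1) * (Nat.factorial (i - 1) : R) * dp.dpow i x) ∈ I) ∧
    -- … and log((1+x)(1+y)) = log(1+x) + log(1+y), where
    -- (1+x)(1+y) = 1 + (x + y + x*y)
    ∀ x ∈ I, ∀ y ∈ I,
      (∑ i ∈ Finset.Icc 1 m,
        (-1 : R) ^ (i + 1) * (Nat.factorial (i - 1) : R) *
          dp.dpow i (x + y + x * y)) =
      (∑ i ∈ Finset.Icc 1 m,
        (-1 : R) ^ (i + 1) * (Nat.factorial (i - 1) : R) * dp.dpow i x) +
      (∑ i ∈ Finset.Icc 1 m,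
        (-1 : R) ^ (i + 1) * (Nat.factorial (i - 1) : R) * dp.dpow i y) := by
  constructor
  · intro x hx
    exact Ideal.sum_mem I fun i hi =>
      Ideal.mul_mem_left _ _
        (dp.dpow_mem (by simp only [Finset.mem_Icc] at hi; omega) hx)
  intro x hx y hy
  have hxy : x + y ∈ I := I.add_mem hx hy
  have hmul : x * y ∈ I := I.mul_mem_right y hx
  have hz : x + y + x * y ∈ I := I.add_mem hxy hmul
  -- extension of the sums from `Icc 1 m` to `Icc 1 (2*m)`
  have hext : ∀ w ∈ I, (∑ i ∈ Finset.Icc 1 m, lc R i * dp.dpow i w) =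
      ∑ i ∈ Finset.Icc 1 (2 * m), lc R i * dp.dpow i w := by
    intro w hw
    apply Finset.sum_subset
    · intro t ht
      simp only [Finset.mem_Icc] at ht ⊢
      omega
    · intro t ht hnt
      simp only [Finset.mem_Icc] at ht hnt
      rw [hconv w hw t (by omega), mul_zero]
  have hins : Finset.range (2 * m + 1) = insert 0 (Finset.Icc 1 (2 * m)) := by
    ext t
    simp only [Finset.mem_range, Finset.mem_insert, Finset.mem_Icc]
    omega
  have hIccRange : ∀ g : ℕ → R, (∑ n ∈ Finset.range (2 * m + 1), g n) =
      g 0 + ∑ n ∈ Finset.Icc 1 (2 * m), g n := by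
    intro g
    rw [hins, Finset.sum_insert (by simp)]
  -- expansion of `dpow n (x + y + x*y)`
  have hexp : ∀ n : ℕ, dp.dpow n (x + y + x * y) =
      ∑ k ∈ Finset.range (n + 1), ∑ l ∈ Finset.range (k + 1),
        ((n - k).factorial : R) * (((l + (n - k)).choose l : ℕ) : R) *
          ((((k - l) + (n - k)).choose (k - l) : ℕ) : R) *
          dp.dpow (l + (n - k)) x * dp.dpow ((k - l) + (n - k)) y := by
    intro n
    rw [dp.dpow_add' (n := n) hxy hmul]
    apply Finset.sum_congr rfl
    intro k _
    rw [dp.dpow_mul (n := n - k) hy, ← dp.factorial_mul_dpow_eq_pow (n := n - k) hx,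
      dp.dpow_add' (n := k) hx hy, Finset.sum_mul]
    apply Finset.sum_congr rfl
    intro l _
    have h1 := dp.mul_dpow (m := l) (n := n - k) hx
    have h2 := dp.mul_dpow (m := k - l) (n := n - k) hy
    linear_combination (((n - k).factorial : R) * dp.dpow (k - l) y * dp.dpow (n - k) y) * h1
      + (((n - k).factorial : R) * (((l + (n - k)).choose l : ℕ) : R) *
          dp.dpow (l + (n - k)) x) * h2
  -- the sum over the sigma type
  have step2 : (∑ p ∈ (Finset.range (2 * m + 1)).sigma
        (fun n => (Finset.range (n + 1)).sigma fun k => Finset.range (k + 1)),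
        fterm dp x y p) =
      ∑ n ∈ Finset.range (2 * m + 1), lc R n * dp.dpow n (x + y + x * y) := by
    rw [Finset.sum_sigma]
    apply Finset.sum_congr rfl
    intro n _
    rw [Finset.sum_sigma, hexp n, Finset.mul_sum]
    apply Finset.sum_congr rfl
    intro k _
    rw [Finset.mul_sum]
    apply Finset.sum_congr rfl
    intro l _
    simp only [fterm]
  -- the bijection
  have step3 : (∑ p ∈ (Finset.range (2 * m + 1)).sigma
        (fun n => (Finset.range (n + 1)).sigma fun k => Finset.range (k + 1)),
        fterm dp x y p) =
      ∑ t ∈ (Finset.range (2 * m + 1) ×ˢ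
          (Finset.range (2 * m + 1) ×ˢ Finset.range (2 * m + 1))).filter
          (fun t => t.2.2 ≤ t.1 ∧ t.2.2 ≤ t.2.1 ∧ t.1 + t.2.1 - t.2.2 ≤ 2 * m),
        Hterm dp x y t := by
    apply Finset.sum_nbij'
      (i := fun p => (p.2.2 + (p.1 - p.2.1), (p.2.1 - p.2.2) + (p.1 - p.2.1), p.1 - p.2.1))
      (j := fun t => ⟨t.1 + t.2.1 - t.2.2, ⟨(t.1 - t.2.2) + (t.2.1 - t.2.2), t.1 - t.2.2⟩⟩)
    · intro p hp
      obtain ⟨n, k, l⟩ := p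
      simp only [Finset.mem_sigma, Finset.mem_range] at hp
      simp only [Finset.mem_filter, Finset.mem_product, Finset.mem_range]
      omega
    · intro t ht
      obtain ⟨i, j, b⟩ := t
      simp only [Finset.mem_filter, Finset.mem_product, Finset.mem_range] at ht
      simp only [Finset.mem_sigma, Finset.mem_range]
      omega
    · intro p hp
      obtain ⟨n, k, l⟩ := p
      simp only [Finset.mem_sigma, Finset.mem_range] at hp
      dsimp only
      rw [show l + (n - k) + ((k - l) + (n - k)) - (n - k) = n from by omega,
        show (l + (n - k) - (n - k)) + ((k - l) + (n - k) - (n - k)) = k from by omega,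
        show l + (n - k) - (n - k) = l from by omega]
    · intro t ht
      obtain ⟨i, j, b⟩ := t
      simp only [Finset.mem_filter, Finset.mem_product, Finset.mem_range] at ht
      simp only [Prod.mk.injEq]
      refine ⟨by omega, by omega, by omega⟩
    · intro p hp
      obtain ⟨n, k, l⟩ := p
      simp only [Finset.mem_sigma, Finset.mem_range] at hp
      simp only [fterm, Hterm]
      rw [show l + (n - k) + ((k - l) + (n - k)) - (n - k) = n from by omega,
        ← Nat.choose_symm_add, ← Nat.choose_symm_add]
      push_cast
      ring
  -- dropping the filter
  have step4 : (∑ t ∈ (Finset.range (2 * m + 1) ×ˢ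
          (Finset.range (2 * m + 1) ×ˢ Finset.range (2 * m + 1))).filter
          (fun t => t.2.2 ≤ t.1 ∧ t.2.2 ≤ t.2.1 ∧ t.1 + t.2.1 - t.2.2 ≤ 2 * m),
        Hterm dp x y t) =
      ∑ t ∈ Finset.range (2 * m + 1) ×ˢ
          (Finset.range (2 * m + 1) ×ˢ Finset.range (2 * m + 1)),
        Hterm dp x y t := by
    apply Finset.sum_subset (Finset.filter_subset _ _)
    intro t ht hnt
    obtain ⟨i, j, b⟩ := t
    have hc : ¬(b ≤ i ∧ b ≤ j ∧ i + j - b ≤ 2 * m) := fun hcc =>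
      hnt (Finset.mem_filter.mpr ⟨ht, hcc⟩)
    by_cases h1 : b ≤ i
    · by_cases h2 : b ≤ j
      · rcases (by omega : m ≤ i ∨ m ≤ j) with h | h
        · simp [Hterm, hconv x hx i h]
        · simp [Hterm, hconv y hy j h]
      · simp [Hterm, Nat.choose_eq_zero_of_lt (show j < b by omega)]
    · simp [Hterm, Nat.choose_eq_zero_of_lt (show i < b by omega)]
  -- splitting into the double sum
  have step5 : (∑ t ∈ Finset.range (2 * m + 1) ×ˢ
          (Finset.range (2 * m + 1) ×ˢ Finset.range (2 * m + 1)),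
        Hterm dp x y t) =
      ∑ i ∈ Finset.range (2 * m + 1), ∑ j ∈ Finset.range (2 * m + 1),
        Kco R m i j * (dp.dpow i x * dp.dpow j y) := by
    rw [Finset.sum_product]
    apply Finset.sum_congr rfl
    intro i _
    rw [Finset.sum_product]
    apply Finset.sum_congr rfl
    intro j _
    exact Hsum dp x y m i j
  -- evaluating the double sum
  have hrow : ∀ i, 1 ≤ i → i ≤ 2 * m →
      (∑ j ∈ Finset.range (2 * m + 1), Kco R m i j * (dp.dpow i x * dp.dpow j y)) =
      lc R i * dp.dpow i x := by
    intro i h1 h2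
    rw [hIccRange]
    have hz2 : (∑ j ∈ Finset.Icc 1 (2 * m), Kco R m i j * (dp.dpow i x * dp.dpow j y)) = 0 :=
      Finset.sum_eq_zero fun j hj => by
        simp only [Finset.mem_Icc] at hj
        rw [Kco_eq_zero m i j h1 hj.1 hj.2, zero_mul]
    rw [hz2, Kco_zero_right, dp.dpow_zero hy]
    ring
  have hrow0 : (∑ j ∈ Finset.range (2 * m + 1), Kco R m 0 j * (dp.dpow 0 x * dp.dpow j y)) =
      -1 + ∑ j ∈ Finset.Icc 1 (2 * m), lc R j * dp.dpow j y := by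
    rw [hIccRange, dp.dpow_zero hx]
    congr 1
    · rw [Kco_zero_left, dp.dpow_zero hy]
      simp [lc]
    · apply Finset.sum_congr rfl
      intro j _
      rw [Kco_zero_left, one_mul]
  have hdouble : (∑ i ∈ Finset.range (2 * m + 1), ∑ j ∈ Finset.range (2 * m + 1),
        Kco R m i j * (dp.dpow i x * dp.dpow j y)) =
      -1 + (∑ j ∈ Finset.Icc 1 (2 * m), lc R j * dp.dpow j y) +
        ∑ i ∈ Finset.Icc 1 (2 * m), lc R i * dp.dpow i x := by
    rw [hIccRange, hrow0]
    have hr : (∑ i ∈ Finset.Icc 1 (2 * m), ∑ j ∈ Finset.range (2 * m + 1),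
          Kco R m i j * (dp.dpow i x * dp.dpow j y)) =
        ∑ i ∈ Finset.Icc 1 (2 * m), lc R i * dp.dpow i x :=
      Finset.sum_congr rfl fun i hi => by
        simp only [Finset.mem_Icc] at hi
        exact hrow i hi.1 hi.2
    rw [hr]
  -- putting everything together
  have main : (∑ i ∈ Finset.Icc 1 m, lc R i * dp.dpow i (x + y + x * y)) =
      (∑ i ∈ Finset.Icc 1 m, lc R i * dp.dpow i x) +
      ∑ i ∈ Finset.Icc 1 m, lc R i * dp.dpow i y := by
    rw [hext _ hz, hext _ hx, hext _ hy]
    have h0 : lc R 0 * dp.dpow 0 (x + y + x * y) = -1 := by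
      rw [dp.dpow_zero hz]
      simp [lc]
    have hr := hIccRange (fun n => lc R n * dp.dpow n (x + y + x * y))
    rw [h0] at hr
    have := step2.symm.trans (step3.trans (step4.trans (step5.trans hdouble)))
    rw [this] at hr
    linear_combination -hr
  simpa only [lc] using main
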